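/- Let h₃ be the 3-dimensional Heisenberg Lie algebra with basis {X,Y,Z} and [X,Y]=Z, and let θ be any cyclic 2-cocycle of h₃. Then there exists λ ∈ ℂ such that θ(X,Y) = λZ*, θ(Y,Z) = λX*, θ(Z,X) = λY*, where {X*,Y*,Z*} is the dual basis. -/

import Mathlib

/-- Every cyclic 2-cocycle `θ` of the 3-dimensional Heisenberg Lie algebra
`h₃` (basis `X = b 0`, `Y = b 1`, `Z = b 2`, `[X,Y] = Z`) satisfies
`θ(X,Y) = λZ*`, `θ(Y,Z) = λX*`, `θ(Z,X) = λY*` for some `λ ∈ ℂ`. -/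
theorem stmt_12 (L : Type*) [LieRing L] [LieAlgebra ℂ L]
    (b : Module.Basis (Fin 3) ℂ L)
    (hXY : ⁅b 0, b 1⁆ = b 2) (hXZ : ⁅b 0, b 2⁆ = 0) (hYZ : ⁅b 1, b 2⁆ = 0)
    (θ : L → L → Module.Dual ℂ L)
    (hθskew : ∀ x y, θ x y = - θ y x)
    (hθlin : ∀ (a : ℂ) (x x' y : L), θ (a • x + x') y = a • θ x y + θ x' y)
    (hcocycle : ∀ x y z w : L,
      θ x y ⁅z, w⁆ + θ ⁅x, y⁆ z w + θ y z ⁅x, w⁆ + θ ⁅y, z⁆ x w +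
        θ z x ⁅y, w⁆ + θ ⁅z, x⁆ y w = 0)
    (hcyclic : ∀ x y z : L, θ x y z = θ y z x) :
    ∃ lam : ℂ,
      θ (b 0) (b 1) = lam • b.dualBasis 2 ∧
      θ (b 1) (b 2) = lam • b.dualBasis 0 ∧
      θ (b 2) (b 0) = lam • b.dualBasis 1 := by
  -- θ(x,x)(w) = 0 from skew-symmetry
  have hdiag : ∀ x w : L, θ x x w = 0 := by
    intro x w
    have h := congrArg (fun f : Module.Dual ℂ L => f w) (hθskew x x)
    simp only [LinearMap.neg_apply] at h
    linear_combination h / 2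
  -- θ(x,y)(y) = 0
  have h2 : ∀ x y : L, θ x y y = 0 := by
    intro x y
    rw [hcyclic]
    exact hdiag y x
  -- θ(x,y)(x) = 0
  have h1 : ∀ x y : L, θ x y x = 0 := by
    intro x y
    have h := hcyclic x y x
    rw [hθskew y x] at h
    simp only [LinearMap.neg_apply] at h
    linear_combination h / 2
  refine ⟨θ (b 0) (b 1) (b 2), ?_, ?_, ?_⟩ <;>
  · apply b.ext
    intro i
    fin_cases i <;>
      simp [Module.Basis.dualBasis_apply_self, h1, h2, ← hcyclic, hcyclic (b 2) (b 0) (b 1)]
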